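/- Let k ≥ 4 be an even integer and set F := e^{ikπ/4}·E*_{k,5}(i/√5). If k ≡ 0 (mod 8) then F is a positive real number; if k ≡ 4 (mod 8) then F is a negative real number; and if k ≡ 2 (mod 4) then E*_{k,5}(i/√5) = 0 (hence F = 0). -/

import Mathlib

open Complex

/-- The weight-`k` Eisenstein series for `SL₂(ℤ)`:
`E_k(z) = (1/2) ∑_{(c,d) coprime} (cz+d)^{-k}`. -/
noncomputable def Ek (k : ℕ) (z : ℂ) : ℂ :=
  (1 / 2) * ∑' q : {q : ℤ × ℤ // Int.gcd q.1 q.2 = 1},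
    (((q : ℤ × ℤ).1 : ℂ) * z + ((q : ℤ × ℤ).2 : ℂ)) ^ (-(k : ℤ))

/-- The Eisenstein series associated with the Fricke group `Γ₀*(p)`:
`E*_{k,p}(z) = (p^{k/2} E_k(pz) + E_k(z)) / (p^{k/2} + 1)`. -/
noncomputable def EkStar (k p : ℕ) (z : ℂ) : ℂ :=
  ((p : ℂ) ^ (k / 2) * Ek k ((p : ℂ) * z) + Ek k z) / ((p : ℂ) ^ (k / 2) + 1)

namespace Stmt6Aux

abbrev S := {q : ℤ × ℤ // Int.gcd q.1 q.2 = 1}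

/-- (c,d) ↦ (d,-c) -/
def e1 : S ≃ S where
  toFun q := ⟨(q.1.2, -q.1.1), by have := q.2; simpa [Int.gcd, Nat.gcd_comm] using this⟩
  invFun q := ⟨(-q.1.2, q.1.1), by have := q.2; simpa [Int.gcd, Nat.gcd_comm] using this⟩
  left_inv q := by simp
  right_inv q := by simp

/-- (c,d) ↦ (-c,d) -/
def e2 : S ≃ S where
  toFun q := ⟨(-q.1.1, q.1.2), by have := q.2; simpa [Int.gcd] using this⟩
  invFun q := ⟨(-q.1.1, q.1.2), by have := q.2; simpa [Int.gcd] using this⟩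
  left_inv q := by simp
  right_inv q := by simp

noncomputable def s5 : ℝ := Real.sqrt 5

lemma s5_pos : 0 < s5 := Real.sqrt_pos.mpr (by norm_num)
lemma s5_sq : (s5 : ℝ) * s5 = 5 := Real.mul_self_sqrt (by norm_num)
lemma s5_ne : (s5 : ℂ) ≠ 0 := by
  simpa using ne_of_gt s5_pos

lemma z0_mul_z1 : (I / (s5:ℂ)) * (I * (s5:ℂ)) = -1 := by
  field_simp [s5_ne]
  rw [I_sq, mul_div_assoc, div_self s5_ne]; ring

lemma five_z0 : (5 : ℂ) * (I / (s5:ℂ)) = I * s5 := by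
  have h5 : ((s5:ℂ)) * s5 = 5 := by
    rw [← ofReal_mul, s5_sq]; norm_num
  rw [← h5, mul_div_assoc', div_eq_iff s5_ne]; ring

lemma L1 (k : ℕ) : Ek k (I / (s5:ℂ)) = (I / (s5:ℂ)) ^ (-(k:ℤ)) * Ek k (I * (s5:ℂ)) := by
  unfold Ek
  rw [← (e1.tsum_eq (fun q : S => (((q : ℤ × ℤ).1 : ℂ) * (I / (s5:ℂ)) + ((q : ℤ × ℤ).2 : ℂ)) ^ (-(k : ℤ))))]
  have key : ∀ q : S, (((e1 q : ℤ × ℤ).1 : ℂ) * (I / (s5:ℂ)) + ((e1 q : ℤ × ℤ).2 : ℂ)) ^ (-(k : ℤ))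
      = (I / (s5:ℂ)) ^ (-(k:ℤ)) * ((((q : ℤ × ℤ).1 : ℂ) * (I * (s5:ℂ)) + ((q : ℤ × ℤ).2 : ℂ)) ^ (-(k : ℤ))) := by
    intro q
    have : (((e1 q : ℤ × ℤ).1 : ℂ) * (I / (s5:ℂ)) + ((e1 q : ℤ × ℤ).2 : ℂ))
        = (I / (s5:ℂ)) * ((((q : ℤ × ℤ).1 : ℂ) * (I * (s5:ℂ)) + ((q : ℤ × ℤ).2 : ℂ))) := by
      show ((q.1.2 : ℂ)) * (I / (s5:ℂ)) + ((-q.1.1 : ℤ) : ℂ) = _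
      push_cast
      have := z0_mul_z1
      linear_combination (-((q:ℤ×ℤ).1:ℂ)) * this
    rw [this, mul_zpow]
  rw [tsum_congr key, tsum_mul_left]
  ring

lemma L2 (k : ℕ) : (starRingEnd ℂ) (Ek k (I * (s5:ℂ))) = Ek k (I * (s5:ℂ)) := by
  unfold Ek
  rw [map_mul]
  rw [show (starRingEnd ℂ) (∑' q : S, (((q : ℤ × ℤ).1 : ℂ) * (I * (s5:ℂ)) + ((q : ℤ × ℤ).2 : ℂ)) ^ (-(k : ℤ)))
      = ∑' q : S, star ((((q : ℤ × ℤ).1 : ℂ) * (I * (s5:ℂ)) + ((q : ℤ × ℤ).2 : ℂ)) ^ (-(k : ℤ))) from tsum_star]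
  have key : ∀ q : S, star ((((q : ℤ × ℤ).1 : ℂ) * (I * (s5:ℂ)) + ((q : ℤ × ℤ).2 : ℂ)) ^ (-(k : ℤ)))
      = (((e2 q : ℤ × ℤ).1 : ℂ) * (I * (s5:ℂ)) + ((e2 q : ℤ × ℤ).2 : ℂ)) ^ (-(k : ℤ)) := by
    intro q
    show (starRingEnd ℂ) _ = _
    rw [map_zpow₀, map_add, map_mul, map_mul]
    simp only [conj_I, conj_ofReal, map_intCast]
    show _ = (((-q.1.1 : ℤ) : ℂ) * (I * (s5:ℂ)) + ((q.1.2 : ℤ) : ℂ)) ^ (-(k : ℤ))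
    push_cast
    ring_nf
  rw [tsum_congr key, e2.tsum_eq (fun q : S => (((q : ℤ × ℤ).1 : ℂ) * (I * (s5:ℂ)) + ((q : ℤ × ℤ).2 : ℂ)) ^ (-(k : ℤ)))]
  have h12 : (starRingEnd ℂ) (1/2 : ℂ) = 1/2 := by
    rw [map_div₀, map_one, map_ofNat]
  rw [h12]
noncomputable def u (c : ℤ) : ℝ := if c = 0 then 0 else (1/9) * (1/(c:ℝ)^2)
noncomputable def v (d : ℤ) : ℝ := 1/((d:ℝ)^2+1)

lemma u_nonneg : ∀ c, 0 ≤ u c := by intro c; unfold u; split <;> positivity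
lemma v_nonneg : ∀ d, 0 ≤ v d := by intro d; unfold v; positivity

lemma hnat : Summable (fun n:ℕ => (1:ℝ)/(n:ℝ)^2) :=
  Real.summable_one_div_nat_pow.mpr one_lt_two

lemma hz2 : ∑' n:ℕ, (1:ℝ)/(n:ℝ)^2 = Real.pi^2/6 := hasSum_zeta_two.tsum_eq

lemma hshift_summable : Summable (fun n:ℕ => (1:ℝ)/((n:ℝ)+1)^2) := by
  have := (summable_nat_add_iff 1).mpr hnat
  apply this.congr; intro n; push_cast; ring_nf

lemma hshift : ∑' n:ℕ, (1:ℝ)/((n:ℝ)+1)^2 = Real.pi^2/6 := by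
  have h := Summable.tsum_eq_zero_add hnat
  have h0 : (1:ℝ)/((0:ℕ):ℝ)^2 = 0 := by norm_num
  rw [hz2, h0, zero_add] at h
  rw [h]; apply tsum_congr; intro n; push_cast; ring

lemma hu_nat : (fun n:ℕ => u (n:ℤ)) = fun n:ℕ => (1/9) * ((1:ℝ)/(n:ℝ)^2) := by
  funext n
  unfold u
  rcases Nat.eq_zero_or_pos n with h | h
  · subst h; norm_num
  · rw [if_neg (by exact_mod_cast h.ne')]
    norm_num

lemma hu_neg : (fun n:ℕ => u (-((n:ℤ)+1))) = fun n:ℕ => (1/9) * ((1:ℝ)/((n:ℝ)+1)^2) := by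
  funext n
  unfold u
  rw [if_neg (by omega)]
  push_cast
  ring_nf

lemma hu : Summable u := by
  have hs : Summable (fun c:ℤ => (1/9) * ((1:ℝ)/(c:ℝ)^(2:ℕ))) :=
    (Real.summable_one_div_int_pow.mpr one_lt_two).mul_left _
  apply hs.of_nonneg_of_le u_nonneg
  intro c; unfold u; split
  · positivity
  · norm_num

lemma hv_shift : Summable (fun n:ℕ => v ((n:ℤ)+1)) := by
  apply hshift_summable.of_nonneg_of_le (fun n => v_nonneg _)
  intro n
  unfold v
  exact one_div_le_one_div_of_le (by positivity) (by push_cast; nlinarith)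

lemma hv_nat : Summable (fun n:ℕ => v (n:ℤ)) := by
  rw [← summable_nat_add_iff 1]
  apply hv_shift.congr
  intro n; push_cast; norm_num

lemma hv_neg_eq : (fun n:ℕ => v (-((n:ℤ)+1))) = fun n:ℕ => v ((n:ℤ)+1) := by
  funext n; unfold v; push_cast; ring_nf

lemma hv : Summable v := by
  apply Summable.of_nat_of_neg_add_one hv_nat
  rw [hv_neg_eq]
  exact_mod_cast (summable_nat_add_iff 1).mpr hv_nat

lemma sum_u : ∑' c:ℤ, u c = Real.pi^2/27 := by
  rw [tsum_of_nat_of_neg_add_one (by rw [hu_nat]; exact hnat.mul_left _)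
    (by rw [hu_neg]; exact hshift_summable.mul_left _)]
  rw [hu_nat, hu_neg, tsum_mul_left, tsum_mul_left, hz2, hshift]
  ring

lemma sum_v_le : ∑' d:ℤ, v d ≤ 1 + Real.pi^2/3 := by
  rw [tsum_of_nat_of_neg_add_one hv_nat (by rw [hv_neg_eq]; exact_mod_cast (summable_nat_add_iff 1).mpr hv_nat)]
  have h1 : ∑' n:ℕ, v (n:ℤ) ≤ 1 + Real.pi^2/6 := by
    rw [Summable.tsum_eq_zero_add hv_nat]
    have : v ((0:ℕ):ℤ) = 1 := by unfold v; norm_num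
    rw [this]
    gcongr
    rw [← hshift]
    apply Summable.tsum_le_tsum _ (by exact_mod_cast (summable_nat_add_iff 1).mpr hv_nat) hshift_summable
    intro n
    unfold v
    exact one_div_le_one_div_of_le (by positivity) (by push_cast; nlinarith)
  have h2 : ∑' n:ℕ, v (-((n:ℤ)+1)) ≤ Real.pi^2/6 := by
    rw [hv_neg_eq, ← hshift]
    apply Summable.tsum_le_tsum _ (by exact_mod_cast (summable_nat_add_iff 1).mpr hv_nat) hshift_summable
    intro n
    unfold v
    exact one_div_le_one_div_of_le (by positivity) (by push_cast; nlinarith)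
  linarith

lemma sum_H_lt_two : (∑' c:ℤ, u c) * (∑' d:ℤ, v d) < 2 := by
  have h1 := sum_u
  have h2 := sum_v_le
  have hv0 : 0 ≤ ∑' d:ℤ, v d := tsum_nonneg v_nonneg
  have hpi : Real.pi < 3.15 := Real.pi_lt_d2
  have hpi0 : 0 < Real.pi := Real.pi_pos
  rw [h1]
  have hs : (Real.pi^2/27) * (∑' d:ℤ, v d) ≤ (Real.pi^2/27) * (1+Real.pi^2/3) :=
    mul_le_mul_of_nonneg_left h2 (by positivity)
  have hpisq : Real.pi^2 < 9.9225 := by nlinarith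
  have hp4 : Real.pi^2 * Real.pi^2 < 98.46 := by nlinarith
  have hlt : (Real.pi^2/27) * (1+Real.pi^2/3) < 2 := by nlinarith
  linarith

noncomputable def z1 : UpperHalfPlane := UpperHalfPlane.mk (I * (s5:ℂ)) (by simpa using s5_pos)
lemma z1_coe : (z1 : ℂ) = I * (s5:ℂ) := UpperHalfPlane.coe_mk _ _

noncomputable def f (k : ℕ) (q : S) : ℂ :=
  (((q : ℤ × ℤ).1 : ℂ) * (I * (s5:ℂ)) + ((q : ℤ × ℤ).2 : ℂ)) ^ (-(k : ℤ))

lemma absw (c d : ℤ) :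
    ‖(c : ℂ) * (I * (s5:ℂ)) + (d : ℂ)‖^2 = 5*(c:ℝ)^2 + (d:ℝ)^2 := by
  rw [Complex.sq_norm, Complex.normSq_apply]
  simp [Complex.add_re, Complex.add_im, Complex.mul_re, Complex.mul_im]
  nlinarith [s5_sq]

lemma norm_f (k : ℕ) (q : S) :
    ‖f k q‖ = ‖((q:ℤ×ℤ).1 : ℂ) * (I * (s5:ℂ)) + ((q:ℤ×ℤ).2 : ℂ)‖^(-(k:ℤ)) := by
  rw [f, norm_zpow]

lemma summable_norm_f {k : ℕ} (hk : 3 ≤ k) : Summable (fun q : S => ‖f k q‖) := by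
  have h2 : (2:ℝ) < (k:ℝ) := by exact_mod_cast by omega
  have hbig : Summable (fun x : Fin 2 → ℤ =>
      (EisensteinSeries.r z1) ^ (-(k:ℝ)) * ‖x‖ ^ (-(k:ℝ))) :=
    (EisensteinSeries.summable_one_div_norm_rpow h2).mul_left _
  have hF : Summable (fun x : Fin 2 → ℤ =>
      ‖(x 0 : ℂ) * (z1:ℂ) + (x 1 : ℂ)‖ ^ (-(k:ℝ))) := by
    apply hbig.of_nonneg_of_le (fun x => Real.rpow_nonneg (norm_nonneg _) _)
    intro x
    have := EisensteinSeries.summand_bound z1 (show (0:ℝ) ≤ (k:ℝ) by positivity) x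
    convert this using 3
  have hinj : Function.Injective (fun q : S => (![(q:ℤ×ℤ).1, (q:ℤ×ℤ).2] : Fin 2 → ℤ)) := by
    intro a b hab
    have h0 := congrFun hab 0
    have h1 := congrFun hab 1
    simp at h0 h1
    exact Subtype.ext (Prod.ext h0 h1)
  have := hF.comp_injective hinj
  apply this.congr
  intro q
  simp only [Function.comp, Matrix.cons_val_zero, Matrix.cons_val_one, Matrix.head_cons]
  rw [norm_f, z1_coe, ← Real.rpow_intCast]
  norm_num

lemma summable_f {k : ℕ} (hk : 3 ≤ k) : Summable (f k) := (summable_norm_f hk).of_norm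


def qp : S := ⟨(0,1), by decide⟩
def qm : S := ⟨(0,-1), by decide⟩

lemma f_qp (k : ℕ) : f k qp = 1 := by
  unfold f qp; norm_num

lemma f_qm {k : ℕ} (hke : Even k) : f k qm = 1 := by
  unfold f qm
  norm_num
  exact hke.neg_one_pow

lemma bound_main {k : ℕ} (hk : 4 ≤ k) (q : S) (hc : (q:ℤ×ℤ).1 ≠ 0) :
    ‖f k q‖ ≤ u (q:ℤ×ℤ).1 * v (q:ℤ×ℤ).2 := by
  obtain ⟨⟨c,d⟩,hq⟩ := q
  simp only at hc ⊢
  set A := ‖(c:ℂ)*(I*(s5:ℂ)) + (d:ℂ)‖ with hA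
  have hA2 : A^2 = 5*(c:ℝ)^2+(d:ℝ)^2 := absw c d
  have hc2 : (1:ℝ) ≤ (c:ℝ)^2 := by
    have h1 : (1:ℤ) ≤ c^2 := by rcases lt_or_gt_of_ne hc with h|h <;> nlinarith
    exact_mod_cast h1
  have hA0 : 0 ≤ A := norm_nonneg _
  have hA1 : 1 ≤ A := by nlinarith [sq_nonneg ((d:ℝ))]
  have hnorm : ‖f k ⟨(c,d),hq⟩‖ = (A^k)⁻¹ := by
    rw [norm_f]; simp only [← hA]; rw [zpow_neg, zpow_natCast]
  rw [hnorm]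
  have h4 : A^4 ≤ A^k := pow_le_pow_right₀ hA1 hk
  have hineq : (9:ℝ)*(c:ℝ)^2*((d:ℝ)^2+1) ≤ A^4 := by
    have h44 : A^4 = (A^2)^2 := by ring
    rw [h44, hA2]
    nlinarith [sq_nonneg (d:ℝ), sq_nonneg ((c:ℝ)*(d:ℝ)), sq_nonneg ((c:ℝ)^2 - (d:ℝ)^2)]
  have hupos : (0:ℝ) < 9*(c:ℝ)^2*((d:ℝ)^2+1) := by positivity
  have hfin : (A^k)⁻¹ ≤ (9*(c:ℝ)^2*((d:ℝ)^2+1))⁻¹ :=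
    inv_anti₀ hupos (le_trans hineq h4)
  refine hfin.trans_eq ?_
  unfold u v
  rw [if_neg hc]
  field_simp

lemma c_ne_zero {q : S} (h1 : q ≠ qp) (h2 : q ≠ qm) : (q:ℤ×ℤ).1 ≠ 0 := by
  obtain ⟨⟨c,d⟩,hq⟩ := q
  intro hc
  simp only at hc
  subst hc
  have hd : d.natAbs = 1 := by simpa [Int.gcd] using hq
  rcases Int.natAbs_eq_iff.mp hd with h | h
  · exact h1 (Subtype.ext (Prod.ext rfl (by simpa [qp] using h)))
  · exact h2 (Subtype.ext (Prod.ext rfl (by simpa [qm] using h)))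

lemma pos_re {k : ℕ} (hk : 4 ≤ k) (hke : Even k) : 0 < (Ek k (I*(s5:ℂ))).re := by
  have hk3 : 3 ≤ k := by omega
  have hf := summable_f (k := k) hk3
  have hnf := summable_norm_f (k := k) hk3
  classical
  -- split off qp
  have h1 := Summable.tsum_eq_add_tsum_ite hf qp
  have hupd : Summable (fun q : S => if q = qp then 0 else f k q) := by
    apply (hf.update qp 0).congr
    intro q
    rw [Function.update_apply]
  have h2 := Summable.tsum_eq_add_tsum_ite hupd qm
  have hqmne : qm ≠ qp := by decide
  rw [if_neg hqmne] at h2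
  set T := ∑' q : S, (if q = qm then 0 else if q = qp then 0 else f k q) with hT
  -- H summability
  have hH : Summable (fun p : ℤ×ℤ => u p.1 * v p.2) :=
    hu.mul_of_nonneg hv u_nonneg v_nonneg
  have hHs : Summable (fun q : S => u (q:ℤ×ℤ).1 * v (q:ℤ×ℤ).2) :=
    (hH.comp_injective Subtype.val_injective).congr (fun q => rfl)
  -- pointwise bound for the T summand norms
  have hptw : ∀ q : S, ‖(if q = qm then 0 else if q = qp then 0 else f k q)‖
      ≤ u (q:ℤ×ℤ).1 * v (q:ℤ×ℤ).2 := by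
    intro q
    by_cases hqm : q = qm
    · rw [hqm, if_pos rfl, norm_zero]
      exact mul_nonneg (u_nonneg _) (v_nonneg _)
    · rw [if_neg hqm]
      by_cases hqp : q = qp
      · rw [hqp, if_pos rfl, norm_zero]
        exact mul_nonneg (u_nonneg _) (v_nonneg _)
      · rw [if_neg hqp]
        exact bound_main hk q (c_ne_zero hqp hqm)
  have hTsummand : Summable (fun q : S => ‖(if q = qm then 0 else if q = qp then 0 else f k q)‖) :=
    hHs.of_nonneg_of_le (fun q => norm_nonneg _) hptw
  have hTn : ‖T‖ ≤ ∑' q : S, u (q:ℤ×ℤ).1 * v (q:ℤ×ℤ).2 :=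
    (norm_tsum_le_tsum_norm hTsummand).trans (Summable.tsum_le_tsum hptw hTsummand hHs)
  have hsub : ∑' q : S, u (q:ℤ×ℤ).1 * v (q:ℤ×ℤ).2 ≤ ∑' p : ℤ×ℤ, u p.1 * v p.2 := by
    apply Summable.tsum_le_tsum_of_inj Subtype.val Subtype.val_injective
      (fun p _ => mul_nonneg (u_nonneg _) (v_nonneg _)) (fun q => le_rfl) hHs hH
  have hprod : ∑' p : ℤ×ℤ, u p.1 * v p.2 = (∑' c:ℤ, u c) * (∑' d:ℤ, v d) := by
    rw [Summable.tsum_prod' hH (fun c => hv.mul_left (u c))]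
    simp_rw [tsum_mul_left]
    rw [tsum_mul_right]
  have hTlt : ‖T‖ < 2 := by
    calc ‖T‖ ≤ _ := hTn
    _ ≤ _ := hsub
    _ = _ := hprod
    _ < 2 := sum_H_lt_two
  -- assemble
  have hEk : Ek k (I*(s5:ℂ)) = (1/2 : ℂ) * (1 + (1 + T)) := by
    rw [Ek,
      show (∑' q : S, (((q:ℤ×ℤ).1:ℂ)*(I*(s5:ℂ)) + ((q:ℤ×ℤ).2:ℂ)) ^ (-(k:ℤ))) = ∑' q : S, f k q from rfl,
      h1, h2, f_qp, f_qm hke]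
  rw [hEk]
  have hre : ((1/2 : ℂ) * (1 + (1 + T))).re = (2 + T.re)/2 := by
    simp [Complex.mul_re, Complex.add_re, Complex.add_im]
    ring
  rw [hre]
  have := Complex.abs_re_le_norm T
  have : T.re > -2 := by
    cases' abs_le.mp this with h _
    linarith
  linarith

lemma h5c : ((s5:ℝ):ℂ)^2 = 5 := by rw [← ofReal_pow]; norm_num [sq, s5_sq]

lemma zpow_z0' (k m : ℕ) (hm : k = 2*m) :
    (I/(s5:ℂ))^(-(k:ℤ)) = ((-1:ℂ)^m) * (5:ℂ)^m := by
  have hbase : (I/(s5:ℂ))^2 = -1/(5:ℂ) := by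
    rw [div_pow, I_sq, h5c]
  rw [zpow_neg, zpow_natCast, hm, pow_mul, hbase, div_pow, inv_div]
  rcases Nat.even_or_odd m with he | ho
  · rw [he.neg_one_pow]; ring
  · rw [ho.neg_one_pow]; ring

lemma EkStar_eq (k m : ℕ) (hm : k = 2*m) :
    EkStar k 5 (I / (s5:ℂ)) =
      (1 + (-1:ℂ)^m) * ((5:ℂ)^m * Ek k (I*(s5:ℂ))) / ((5:ℂ)^m + 1) := by
  have hdiv : k / 2 = m := by omega
  rw [EkStar, hdiv]
  rw [show ((5:ℕ):ℂ) = (5:ℂ) by norm_num, five_z0, L1, zpow_z0' k m hm]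
  ring


lemma Ereal (k : ℕ) : (Ek k (I*(s5:ℂ))).im = 0 := Complex.conj_eq_iff_im.mp (L2 k)

lemma hne (m : ℕ) : ((5:ℂ)^m + 1) ≠ 0 := by
  have h : ((5:ℝ)^m + 1 : ℝ) ≠ 0 := by positivity
  have : (((5:ℝ)^m + 1 : ℝ) : ℂ) = (5:ℂ)^m + 1 := by push_cast; ring
  rw [← this]
  exact_mod_cast h

lemma EkStar_real (k m : ℕ) (hm : k = 2*m) (hme : Even m) :
    EkStar k 5 (I / (s5:ℂ)) = ((2*(5:ℝ)^m/((5:ℝ)^m+1) : ℝ) : ℂ) * Ek k (I*(s5:ℂ)) := by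
  rw [EkStar_eq k m hm, hme.neg_one_pow]
  have hcast : ((2*(5:ℝ)^m/((5:ℝ)^m+1) : ℝ) : ℂ) = 2*(5:ℂ)^m/((5:ℂ)^m+1) := by
    push_cast; ring
  rw [hcast]
  ring


end Stmt6Aux

open Stmt6Aux in
theorem stmt6 (k : ℕ) (hk : 4 ≤ k) (hke : Even k) :
    (k % 8 = 0 →
      (Complex.exp (I * k * Real.pi / 4) * EkStar k 5 (I / Real.sqrt 5)).im = 0 ∧
      0 < (Complex.exp (I * k * Real.pi / 4) * EkStar k 5 (I / Real.sqrt 5)).re) ∧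
    (k % 8 = 4 →
      (Complex.exp (I * k * Real.pi / 4) * EkStar k 5 (I / Real.sqrt 5)).im = 0 ∧
      (Complex.exp (I * k * Real.pi / 4) * EkStar k 5 (I / Real.sqrt 5)).re < 0) ∧
    (k % 4 = 2 → EkStar k 5 (I / Real.sqrt 5) = 0) := by
  rw [show Real.sqrt 5 = s5 from rfl]
  obtain ⟨m, hm'⟩ := hke
  have hm : k = 2*m := by omega
  have hke : Even k := ⟨m, hm'⟩
  have hre : 0 < (Ek k (I*(s5:ℂ))).re := pos_re hk hke
  have him : (Ek k (I*(s5:ℂ))).im = 0 := Ereal k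
  set r : ℝ := 2*(5:ℝ)^m/((5:ℝ)^m+1) with hr
  have hrpos : 0 < r := by positivity
  refine ⟨?_, ?_, ?_⟩
  · intro h8
    obtain ⟨j, hj⟩ : ∃ j, k = 8*j := ⟨k/8, by omega⟩
    have hexp : Complex.exp (I * k * Real.pi / 4) = 1 := by
      rw [show (I * k * Real.pi / 4 : ℂ) = ((j:ℤ):ℂ) * (2 * (Real.pi:ℂ) * I) by
        rw [hj]; push_cast; ring]
      exact Complex.exp_int_mul_two_pi_mul_I j
    have hme : Even m := Nat.even_iff.mpr (by omega)
    rw [hexp, one_mul, EkStar_real k m hm hme]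
    constructor
    · simp only [Complex.mul_im, Complex.ofReal_im, Complex.ofReal_re, him,
        mul_zero, zero_mul, add_zero]
    · simp only [Complex.mul_re, Complex.ofReal_re, Complex.ofReal_im, him,
        mul_zero, zero_mul, sub_zero]
      positivity
  · intro h8
    obtain ⟨j, hj⟩ : ∃ j, k = 8*j + 4 := ⟨k/8, by omega⟩
    have hexp : Complex.exp (I * k * Real.pi / 4) = -1 := by
      rw [show (I * k * Real.pi / 4 : ℂ) = (Real.pi:ℂ) * I + ((j:ℤ):ℂ) * (2 * (Real.pi:ℂ) * I) by
        rw [hj]; push_cast; ring]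
      rw [Complex.exp_add, Complex.exp_int_mul_two_pi_mul_I j, Complex.exp_pi_mul_I]
      ring
    have hme : Even m := Nat.even_iff.mpr (by omega)
    rw [hexp, EkStar_real k m hm hme, neg_one_mul]
    constructor
    · simp only [Complex.neg_im, Complex.mul_im, Complex.ofReal_im, Complex.ofReal_re, him,
        mul_zero, zero_mul, add_zero, neg_zero]
    · simp only [Complex.neg_re, Complex.mul_re, Complex.ofReal_re, Complex.ofReal_im, him,
        mul_zero, zero_mul, sub_zero, neg_zero]
      have : 0 < r * (Ek k (I*(s5:ℂ))).re := by positivity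
      linarith
  · intro h4
    have hmo : Odd m := by
      rcases Nat.even_or_odd m with he | ho
      · exfalso; obtain ⟨t, ht⟩ := he; omega
      · exact ho
    rw [EkStar_eq k m hm, hmo.neg_one_pow]
    norm_num
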